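/- Let $K$ be an infinite field and $n \ge 1$. Let $(x^{(1)}, \ldots, x^{(n)})$ be a coordinate family satisfying the Monin–Rana equations, with each vector $x^{(i)}$ not identically zero, and suppose the coordinates of $x^{(n)}$ are all nonzero and pairwise distinct. Then there exist pairwise distinct elements $p_a, p_b, p_c, p_1, \ldots, p_n \in K$ and nonzero scalars $\lambda_1, \ldots, \lambda_n \in K$ such that $x^{(i)}_j = \lambda_i \, (p_a - p_j)/(p_i - p_j)$ for every $i \in \{1,\ldots,n\}$ and every $j \in L_i$. (In other words, every point of the Monin–Rana zero locus whose $\mathbb{P}^n$ coordinates are nonzero and distinct is the image under the iterated Kapranov embedding $\Omega_n$ of a smooth curve in the interior $M_{0,n+3}$.) -/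

import Mathlib

/-- The Monin–Rana equations for a coordinate family
`x : (i : ℕ) → Fin (i+1) → K`, where `x i` gives the homogeneous coordinates
on the `ℙ^i` factor, indexed by the label set `L_i = {b, c, 1, …, i-1}`
via `b ↔ 0`, `c ↔ 1`, numeric label `j ↔ j+1`. -/
def MoninRana (K : Type*) [Field K] (n : ℕ) (x : (i : ℕ) → Fin (i + 1) → K) : Prop :=
  ∀ i j : ℕ, 1 ≤ i → ∀ _hij : i < j, j ≤ n →
    ∀ m r : Fin (i + 1),
      x i m * (x j (Fin.castLE (by omega) m) - x j ⟨i + 1, by omega⟩)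
          * x j (Fin.castLE (by omega) r)
        = x i r * (x j (Fin.castLE (by omega) r) - x j ⟨i + 1, by omega⟩)
          * x j (Fin.castLE (by omega) m)

/-- (Interior case of the set-theoretic main theorem.)
Over an infinite field, every coordinate family satisfying the Monin–Rana
equations whose `ℙ^n` coordinates are nonzero and pairwise distinct is,
up to nonzero scalars `λ_i` on each factor, the family of interior iterated
Kapranov coordinates of pairwise distinct points
`p 0 = p_a, p 1 = p_b, p 2 = p_c, p (ℓ+2) = p_ℓ`. -/
theorem MR_interior_point_is_kapranov {K : Type*} [Field K] [Infinite K]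
    (n : ℕ) (hn : 1 ≤ n)
    (x : (i : ℕ) → Fin (i + 1) → K)
    (hMR : MoninRana K n x)
    (hne : ∀ i, 1 ≤ i → i ≤ n → ∃ j, x i j ≠ 0)
    (hn0 : ∀ j : Fin (n + 1), x n j ≠ 0)
    (hninj : Function.Injective (x n)) :
    ∃ p : ℕ → K, (∀ s t, s < n + 3 → t < n + 3 → p s = p t → s = t) ∧
      ∃ lam : ℕ → K, (∀ i, 1 ≤ i → i ≤ n → lam i ≠ 0) ∧
        ∀ i, 1 ≤ i → i ≤ n → ∀ j : Fin (i + 1),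
          x i j = lam i * ((p 0 - p ((j : ℕ) + 1)) / (p (i + 2) - p ((j : ℕ) + 1))) := by
  classical
  obtain ⟨l, hl⟩ := Infinite.exists_notMem_finset
    (insert (0:K) (Finset.image (x n) Finset.univ))
  simp only [Finset.mem_insert, Finset.mem_image, Finset.mem_univ, true_and, not_or,
    not_exists] at hl
  obtain ⟨hl0, hly⟩ := hl
  have hyl : ∀ k : Fin (n+1), x n k - l ≠ 0 := fun k h => hly k (sub_eq_zero.mp h)
  have hlyk : ∀ k : Fin (n+1), l - x n k ≠ 0 := fun k h => hly k (sub_eq_zero.mp h).symm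
  set q : Fin (n+1) → K := fun k => x n k / (x n k - l) with hq
  have hq1 : ∀ k, q k ≠ 1 := by
    intro k h
    rw [hq] at h
    rw [div_eq_one_iff_eq (hyl k)] at h
    exact hl0 (by linear_combination h)
  have hq0 : ∀ k, q k ≠ 0 := fun k => div_ne_zero (hn0 k) (hyl k)
  have hqinj : ∀ a b : Fin (n+1), q a = q b → a = b := by
    intro a b h
    apply hninj
    rw [hq] at h
    rw [div_eq_div_iff (hyl a) (hyl b)] at h
    have h2 : l * x n a = l * x n b := by linear_combination -h
    exact mul_left_cancel₀ hl0 h2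
  set p : ℕ → K := fun s => if s = 0 then 0 else if h : s ≤ n + 1 then q ⟨s-1, by omega⟩ else 1
    with hp
  have hp0 : p 0 = 0 := rfl
  have hpq : ∀ s (h1 : 1 ≤ s) (h2 : s ≤ n+1), p s = q ⟨s-1, by omega⟩ := by
    intro s h1 h2
    rw [hp]
    simp only [if_neg (by omega : ¬ s = 0), dif_pos h2]
  have hp1 : ∀ s, n+2 ≤ s → p s = 1 := by
    intro s h1
    rw [hp]
    simp only [if_neg (by omega : ¬ s = 0), dif_neg (by omega : ¬ s ≤ n+1)]
  set lam : ℕ → K := fun i => if h : i < n then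
      (x i ⟨0, by omega⟩ * (x n ⟨0, by omega⟩ - x n ⟨i+1, by omega⟩) / x n ⟨0, by omega⟩)
        * (l / (l - x n ⟨i+1, by omega⟩)) else l with hlam
  -- formula for x i j when i < n, from the MR equation
  have hform : ∀ i (hi : 1 ≤ i) (hin : i < n) (j : Fin (i+1)),
      x i j * ((x n ⟨(j:ℕ), by omega⟩ - x n ⟨i+1, by omega⟩) * x n ⟨0, by omega⟩)
        = x i ⟨0, by omega⟩ * (x n ⟨0, by omega⟩ - x n ⟨i+1, by omega⟩) * x n ⟨(j:ℕ), by omega⟩ := by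
    intro i hi hin j
    have key := hMR i n hi hin le_rfl j ⟨0, by omega⟩
    have hj : (Fin.castLE (by omega : i + 1 ≤ n + 1) j) = (⟨(j:ℕ), by omega⟩ : Fin (n+1)) := rfl
    have h0 : (Fin.castLE (by omega : i + 1 ≤ n + 1) (⟨0, by omega⟩ : Fin (i+1)))
        = (⟨0, by omega⟩ : Fin (n+1)) := rfl
    rw [hj, h0] at key
    linear_combination key
  refine ⟨p, ?_, lam, ?_, ?_⟩
  · -- distinctness
    intro s t hs ht h
    by_contra hst
    have tri : ∀ u : ℕ, u = 0 ∨ (1 ≤ u ∧ u ≤ n+1) ∨ n+2 ≤ u := by omega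
    rcases tri s with rfl | ⟨hs1, hs2⟩ | hs2 <;> rcases tri t with rfl | ⟨ht1, ht2⟩ | ht2
    · exact hst rfl
    · rw [hp0, hpq t ht1 ht2] at h; exact hq0 _ h.symm
    · rw [hp0, hp1 t ht2] at h; exact one_ne_zero h.symm
    · rw [hp0, hpq s hs1 hs2] at h; exact hq0 _ h
    · rw [hpq s hs1 hs2, hpq t ht1 ht2] at h
      have := hqinj _ _ h
      have : s - 1 = t - 1 := Fin.mk.inj_iff.mp this
      omega
    · rw [hpq s hs1 hs2, hp1 t ht2] at h; exact hq1 _ h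
    · rw [hp0, hp1 s hs2] at h; exact one_ne_zero h
    · rw [hpq t ht1 ht2, hp1 s hs2] at h; exact hq1 _ h.symm
    · omega
  · -- lam nonzero
    intro i hi hin
    simp only [hlam]
    by_cases h : i < n
    · rw [dif_pos h]
      exact mul_ne_zero (div_ne_zero (mul_ne_zero
        (by
          -- x i 0 ≠ 0
          obtain ⟨m, hm⟩ := hne i hi (le_of_lt h)
          intro h0
          have hf := hform i hi h m
          rw [h0] at hf
          have hf2 : x i m * ((x n ⟨(m:ℕ), by omega⟩ - x n ⟨i+1, by omega⟩) * x n ⟨0, by omega⟩)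
              = 0 := by rw [hf]; ring
          rcases mul_eq_zero.mp hf2 with h1 | h1
          · exact hm h1
          · rcases mul_eq_zero.mp h1 with h2 | h2
            · exact sub_ne_zero.mpr (fun hh => by
                have := hninj hh
                simp only [Fin.mk.injEq] at this
                omega) h2
            · exact hn0 _ h2)
        (sub_ne_zero.mpr (fun hh => by
          have := hninj hh
          simp only [Fin.mk.injEq] at this
          omega))) (hn0 _)) (div_ne_zero hl0 (hlyk _))
    · rw [dif_neg h]; exact hl0
  · -- main formula
    intro i hi hin j
    have hjn : (j : ℕ) < n + 1 := by have := j.isLt; omega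
    rcases lt_or_eq_of_le hin with h | rfl
    · -- i < n
      set Y := x n ⟨(j:ℕ), by omega⟩ with hY
      set Z := x n ⟨i+1, by omega⟩ with hZ
      set W := x n ⟨0, by omega⟩ with hW
      have hYne : Y ≠ 0 := hn0 _
      have hZne : Z ≠ 0 := hn0 _
      have hWne : W ≠ 0 := hn0 _
      have hYZ : Y - Z ≠ 0 := sub_ne_zero.mpr (fun hh => by
        have := hninj hh; simp only [Fin.mk.injEq] at this; omega)
      have hWZ : W - Z ≠ 0 := sub_ne_zero.mpr (fun hh => by
        have := hninj hh; simp only [Fin.mk.injEq] at this; omega)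
      have hYl : Y - l ≠ 0 := hyl _
      have hZl : Z - l ≠ 0 := hyl _
      have hlZ : l - Z ≠ 0 := hlyk _
      have hpj : p ((j:ℕ) + 1) = Y / (Y - l) := by
        rw [hpq ((j:ℕ)+1) (by omega) (by omega)]
        rfl
      have hpi : p (i + 2) = Z / (Z - l) := by
        rw [hpq (i+2) (by omega) (by omega)]
        rfl
      have hlami : lam i = (x i ⟨0, by omega⟩ * (W - Z) / W) * (l / (l - Z)) := by
        simp only [hlam]
        rw [dif_pos h]
      rw [hp0, hpj, hpi, hlami]
      have hD : Z / (Z - l) - Y / (Y - l) = (l * (Y - Z)) / ((Z - l) * (Y - l)) := by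
        field_simp
        ring
      rw [hD]
      have key := hform i hi h j
      rw [← hY, ← hZ, ← hW] at key
      rw [show (⟨0, by omega⟩ : Fin (i+1)) = 0 from rfl] at key ⊢
      field_simp [hWne, hYne, hYl, hZl, hlZ, hYZ, hl0]
      linear_combination (l - Z) * key
    · -- i = n
      have hpj : p ((j:ℕ) + 1) = x i j / (x i j - l) := by
        rw [hpq ((j:ℕ)+1) (by omega) (by omega)]
        rfl
      rw [hp0, hpj, hp1 (i+2) le_rfl]
      have hlamn : lam i = l := by
        simp only [hlam]
        rw [dif_neg (lt_irrefl i)]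
      rw [hlamn]
      have h1 : 1 - x i j / (x i j - l) = -l / (x i j - l) := by
        field_simp [hyl j]
        ring
      rw [h1]
      field_simp [hyl j, hl0]
      ring
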